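/- If an ADT sort σ contains two incomparable constructor terms t₁[•], t₂[•] with holes • of sort σ, then the sort σ is expanding. -/

import Mathlib

structure ADTSig where
  numSorts : ℕ
  numCtors : ℕ
  ctorArgs : Fin numCtors → List (Fin numSorts)
  ctorRes : Fin numCtors → Fin numSorts

namespace ADTSig

inductive Term (S : ADTSig) : Fin S.numSorts → Type where
  | mk (f : Fin S.numCtors)
      (args : (i : Fin (S.ctorArgs f).length) → Term S ((S.ctorArgs f).get i)) :
      Term S (S.ctorRes f)

def Term.size {S : ADTSig} : {σ : Fin S.numSorts} → Term S σ → ℕ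
  | _, .mk _ args => 1 + ∑ i, (args i).size

def Term.head {S : ADTSig} : {σ : Fin S.numSorts} → Term S σ → Fin S.numCtors
  | _, .mk f _ => f

def WellDefined (S : ADTSig) : Prop := ∀ σ, Nonempty (S.Term σ)

def ExpandingSort (S : ADTSig) (σ : Fin S.numSorts) : Prop :=
  ∀ n : ℕ, ∃ b : ℕ, ∀ b' ≥ b,
    (∀ t : S.Term σ, t.size ≠ b') ∨ n ≤ Nat.card {t : S.Term σ // t.size = b'}

def ExpandingADT (S : ADTSig) : Prop := ∀ σ, ExpandingSort S σ

/-- The size image `𝕊_σ`. -/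
def SizeImage (S : ADTSig) (σ : Fin S.numSorts) : Set ℕ :=
  {b | ∃ t : S.Term σ, t.size = b}

/-- The relativised size image `𝕊^f_σ`: sizes of terms not starting with `f`. -/
def RelSizeImage (S : ADTSig) (σ : Fin S.numSorts) (f : Fin S.numCtors) : Set ℕ :=
  {b | ∃ t : S.Term σ, t.head ≠ f ∧ t.size = b}

/-- Vertices of the bipartite dependency graph: sorts and constructors. -/
abbrev DepVertex (S : ADTSig) := Sum (Fin S.numSorts) (Fin S.numCtors)

/-- Edges of the dependency graph `D`: `(σ₀, f)` for every constructor `f`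
with result sort `σ₀`, and `(f, σ_j)` for every argument sort `σ_j` of `f`. -/
def DepEdge (S : ADTSig) : DepVertex S → DepVertex S → Prop
  | .inl σ, .inr f => S.ctorRes f = σ
  | .inr f, .inl σ => σ ∈ S.ctorArgs f
  | .inl _, .inl _ => False
  | .inr _, .inr _ => False

/-- `l` is a (nonempty) path in `D` from `σ` to itself: a closed walk. -/
def IsClosedWalk (S : ADTSig) (σ : Fin S.numSorts) (l : List (DepVertex S)) : Prop :=
  l ≠ [] ∧ List.Chain (DepEdge S) (Sum.inl σ) l ∧ l.getLast? = some (Sum.inl σ)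

/-- The vertex list (after the starting vertex `σ¹ = ss 0`) of the cycle
`σ¹ → f¹ → σ² → f² → ⋯ → fⁿ → σ¹` given by `ss`, `fs`. -/
def cycleList (S : ADTSig) (n : ℕ) (ss : Fin (n + 1) → Fin S.numSorts)
    (fs : Fin (n + 1) → Fin S.numCtors) : List (DepVertex S) :=
  ((List.finRange (n + 1)).map (fun i => [Sum.inr (fs i), Sum.inl (ss (i + 1))])).flatten

/-- Constructor terms with exactly one hole `•` of sort `τ`; `Ctx S τ σ` is a
term of sort `σ` with a hole of sort `τ`. -/
inductive Ctx (S : ADTSig) (τ : Fin S.numSorts) : Fin S.numSorts → Type where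
  | hole : Ctx S τ τ
  | node (f : Fin S.numCtors) (i : Fin (S.ctorArgs f).length)
      (c : Ctx S τ ((S.ctorArgs f).get i))
      (side : (j : Fin (S.ctorArgs f).length) → j ≠ i →
         S.Term ((S.ctorArgs f).get j)) :
      Ctx S τ (S.ctorRes f)

/-- `c.fill t` = `c[t]`, filling the hole of `c` with the term `t`. -/
def Ctx.fill {S : ADTSig} {τ : Fin S.numSorts} :
    {σ : Fin S.numSorts} → Ctx S τ σ → S.Term τ → S.Term σ
  | _, .hole, t => t
  | _, .node f i c side, t =>
      Term.mk f (fun j =>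
        if h : j = i then cast (by rw [h]) (c.fill t) else side j h)

/-- The size `|t[•]|` of a term with hole: the number of constructor
occurrences (the hole does not count). -/
def Ctx.csize {S : ADTSig} {τ : Fin S.numSorts} :
    {σ : Fin S.numSorts} → Ctx S τ σ → ℕ
  | _, .hole => 0
  | _, .node f i c side =>
      1 + c.csize + ∑ j, if h : j = i then 0 else (side j h).size

/-- Composition of terms with holes: `t₁[•] ∘ t₂[•] = t₁[t₂[•]]`. -/
def Ctx.comp {S : ADTSig} {τ ρ : Fin S.numSorts} :
    {σ : Fin S.numSorts} → Ctx S τ σ → Ctx S ρ τ → Ctx S ρ σ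
  | _, .hole, d => d
  | _, .node f i c side, d => .node f i (c.comp d) side

/-- `c^i`: the `i`-fold composition of a term with hole with itself. -/
def Ctx.pow {S : ADTSig} {σ : Fin S.numSorts} (c : Ctx S σ σ) : ℕ → Ctx S σ σ
  | 0 => .hole
  | i + 1 => c.comp (c.pow i)

/-- Two terms with holes are incomparable if all their fillings differ. -/
def Incomparable {S : ADTSig} {τ₁ τ₂ σ : Fin S.numSorts}
    (c₁ : Ctx S τ₁ σ) (c₂ : Ctx S τ₂ σ) : Prop :=
  ∀ (s₁ : S.Term τ₁) (s₂ : S.Term τ₂), c₁.fill s₁ ≠ c₂.fill s₂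

end ADTSig

namespace ADTSig

theorem Term.one_le_size {S : ADTSig} {σ : Fin S.numSorts} (t : S.Term σ) :
    1 ≤ t.size := by
  cases t with
  | mk f args => simp [Term.size]

theorem Ctx.fill_injective {S : ADTSig} {τ : Fin S.numSorts} :
    ∀ {σ : Fin S.numSorts} (c : Ctx S τ σ), Function.Injective c.fill := by
  intro σ c
  induction c with
  | hole => intro a b hab; exact hab
  | node f i c side ih =>
    intro a b hab
    simp only [Ctx.fill] at hab
    injection hab with _ hargs
    have h3 := congrFun hargs i
    rw [dif_pos rfl, dif_pos rfl] at h3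
    exact ih h3

theorem Ctx.size_fill {S : ADTSig} {τ : Fin S.numSorts} :
    ∀ {σ : Fin S.numSorts} (c : Ctx S τ σ) (t : S.Term τ),
      (c.fill t).size = c.csize + t.size := by
  intro σ c
  induction c with
  | hole => intro t; simp [Ctx.fill, Ctx.csize]
  | node f i c side ih =>
    intro t
    simp only [Ctx.fill, Ctx.csize, Term.size]
    have key : ∀ j, (if h : j = i then cast (by rw [h]) (c.fill t) else side j h).size
        = (if h : j = i then (c.fill t).size else 0) + (if h : j = i then 0 else (side j h).size) := by
      intro j
      by_cases hj : j = i
      · subst hj; simp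
      · simp [hj]
    simp only [key, Finset.sum_add_distrib]
    rw [Finset.sum_dite_eq' Finset.univ i (fun _ _ => (c.fill t).size)]
    simp [ih, Finset.sum_dite_eq']
    ring

theorem Ctx.fill_comp {S : ADTSig} {τ ρ : Fin S.numSorts} :
    ∀ {σ : Fin S.numSorts} (c : Ctx S τ σ) (d : Ctx S ρ τ) (t : S.Term ρ),
      (c.comp d).fill t = c.fill (d.fill t) := by
  intro σ c
  induction c with
  | hole => intro d t; rfl
  | node f i c side ih =>
    intro d t
    simp only [Ctx.comp, Ctx.fill, ih]

theorem Ctx.csize_comp {S : ADTSig} {τ ρ : Fin S.numSorts} :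
    ∀ {σ : Fin S.numSorts} (c : Ctx S τ σ) (d : Ctx S ρ τ),
      (c.comp d).csize = c.csize + d.csize := by
  intro σ c
  induction c with
  | hole => intro d; simp [Ctx.comp, Ctx.csize]
  | node f i c side ih =>
    intro d
    simp only [Ctx.comp, Ctx.csize, ih]
    ring

end ADTSig

namespace ADTSig

/-- Bounded-depth encoding target. -/
abbrev BT (S : ADTSig) (m : ℕ) : Type :=
  (f : Fin S.numCtors) × ((i : Fin (S.ctorArgs f).length) →
      {t : S.Term ((S.ctorArgs f).get i) // t.size ≤ m})

def encT {S : ADTSig} (m : ℕ) :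
    {σ : Fin S.numSorts} → (t : S.Term σ) → t.size ≤ m + 1 → BT S m
  | _, .mk f args, hle => ⟨f, fun i => ⟨args i, by
      have h1 : (args i).size ≤ ∑ j, (args j).size :=
        Finset.single_le_sum (f := fun j => (args j).size)
          (fun j _ => Nat.zero_le _) (Finset.mem_univ i)
      simp only [Term.size] at hle
      omega⟩⟩

theorem encT_inj {S : ADTSig} (m : ℕ) :
    ∀ {σ σ' : Fin S.numSorts} (t : S.Term σ) (t' : S.Term σ')
      (h : t.size ≤ m + 1) (h' : t'.size ≤ m + 1),
      encT m t h = encT m t' h' → HEq t t' := by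
  intro σ σ' t t' h h' he
  cases t with | mk f args =>
  cases t' with | mk g brgs =>
  simp only [encT] at he
  obtain ⟨hfg, hrest⟩ := Sigma.mk.inj_iff.mp he
  subst hfg
  rw [heq_eq_eq] at hrest
  have hargs : args = brgs := by
    funext i
    exact congrArg Subtype.val (congrFun hrest i)
  subst hargs
  rfl

/-- Terms of bounded size form a finite type. -/
theorem finite_terms_le (S : ADTSig) :
    ∀ (m : ℕ) (σ : Fin S.numSorts), Finite {t : S.Term σ // t.size ≤ m} := by
  intro m
  induction m with
  | zero =>
    intro σ
    have : IsEmpty {t : S.Term σ // t.size ≤ 0} := by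
      constructor; rintro ⟨t, ht⟩
      have := t.one_le_size; omega
    infer_instance
  | succ m ih =>
    intro σ
    have hBT : Finite (BT S m) := by
      have : ∀ f : Fin S.numCtors, Finite ((i : Fin (S.ctorArgs f).length) →
          {t : S.Term ((S.ctorArgs f).get i) // t.size ≤ m}) := by
        intro f
        have : ∀ i : Fin (S.ctorArgs f).length,
            Finite {t : S.Term ((S.ctorArgs f).get i) // t.size ≤ m} :=
          fun i => ih _
        exact Pi.finite
      exact Finite.instSigma
    exact Finite.of_injective
      (fun x : {t : S.Term σ // t.size ≤ m + 1} => encT m x.1 x.2)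
      (fun a b hab => Subtype.ext (heq_iff_eq.mp (encT_inj m a.1 b.1 a.2 b.2 hab)))

theorem finite_terms_eq (S : ADTSig) (m : ℕ) (σ : Fin S.numSorts) :
    Finite {t : S.Term σ // t.size = m} := by
  have := finite_terms_le S m σ
  exact Finite.of_injective
    (fun x : {t : S.Term σ // t.size = m} =>
      (⟨x.1, le_of_eq x.2⟩ : {t : S.Term σ // t.size ≤ m}))
    (fun a b hab => Subtype.ext (congrArg (fun y : {t : S.Term σ // t.size ≤ m} => y.1) hab))

/-- Filling a term with a word of contexts. -/
def fillWord {S : ADTSig} {σ : Fin S.numSorts} (c₁ c₂ : Ctx S σ σ) :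
    List Bool → S.Term σ → S.Term σ
  | [], t => t
  | b :: l, t => (if b then c₁ else c₂).fill (fillWord c₁ c₂ l t)

theorem fillWord_size {S : ADTSig} {σ : Fin S.numSorts} (c₁ c₂ : Ctx S σ σ)
    (d : ℕ) (h1 : c₁.csize = d) (h2 : c₂.csize = d) :
    ∀ (l : List Bool) (t : S.Term σ),
      (fillWord c₁ c₂ l t).size = l.length * d + t.size := by
  intro l
  induction l with
  | nil => intro t; simp [fillWord]
  | cons b l ih =>
    intro t
    simp only [fillWord, Ctx.size_fill, ih, List.length_cons]
    cases b <;> simp [h1, h2] <;> ring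

theorem fillWord_inj {S : ADTSig} {σ : Fin S.numSorts} (c₁ c₂ : Ctx S σ σ)
    (hinc : ∀ x y : S.Term σ, c₁.fill x ≠ c₂.fill y) :
    ∀ (l₁ l₂ : List Bool) (t : S.Term σ), l₁.length = l₂.length →
      fillWord c₁ c₂ l₁ t = fillWord c₁ c₂ l₂ t → l₁ = l₂ := by
  intro l₁
  induction l₁ with
  | nil =>
    intro l₂ t hlen _
    cases l₂ with
    | nil => rfl
    | cons b l => simp at hlen
  | cons b₁ l₁ ih =>
    intro l₂ t hlen heq
    cases l₂ with
    | nil => simp at hlen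
    | cons b₂ l₂ =>
      simp only [List.length_cons] at hlen
      cases b₁ <;> cases b₂ <;> simp only [fillWord, if_true, if_false] at heq
      · rw [ih l₂ t (by omega) (c₂.fill_injective heq)]
      · exact absurd heq.symm (hinc _ _)
      · exact absurd heq (hinc _ _)
      · rw [ih l₂ t (by omega) (c₁.fill_injective heq)]

end ADTSig

namespace ADTSig

theorem Ctx.eq_hole_of_csize_eq_zero {S : ADTSig} {τ : Fin S.numSorts} :
    ∀ {σ : Fin S.numSorts} (c : Ctx S τ σ), c.csize = 0 →
      ∃ _ : τ = σ, HEq c (Ctx.hole : Ctx S τ τ) := by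
  intro σ c hc
  cases c with
  | hole => exact ⟨rfl, HEq.rfl⟩
  | node f i c side => simp [Ctx.csize] at hc

end ADTSig


open ADTSig in
/-- **Lemma 4.** If an ADT sort `σ` contains two incomparable constructor
terms `t₁[•], t₂[•]` with holes `•` of sort `σ`, then `σ` is expanding. -/
theorem incomparable_implies_expanding (S : ADTSig) (hS : S.WellDefined)
    (σ : Fin S.numSorts) (t₁ t₂ : Ctx S σ σ)
    (h : Incomparable t₁ t₂) : ExpandingSort S σ := by
  classical
  obtain ⟨u0⟩ := hS σ
  set c₁ : Ctx S σ σ := t₁.comp t₂ with hc₁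
  set c₂ : Ctx S σ σ := t₂.comp t₁ with hc₂
  set d : ℕ := t₁.csize + t₂.csize with hd
  have hc₁s : c₁.csize = d := by rw [hc₁, Ctx.csize_comp]
  have hc₂s : c₂.csize = d := by rw [hc₂, Ctx.csize_comp, hd]; omega
  have hd1 : 1 ≤ d := by
    by_contra hc
    have ht1 : t₁.csize = 0 := by omega
    obtain ⟨-, hheq⟩ := Ctx.eq_hole_of_csize_eq_zero t₁ ht1
    have ht1' : t₁ = Ctx.hole := heq_iff_eq.mp hheq
    exact h (t₂.fill u0) u0 (by rw [ht1']; rfl)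
  have hinc : ∀ x y : S.Term σ, c₁.fill x ≠ c₂.fill y := by
    intro x y he
    rw [hc₁, hc₂, Ctx.fill_comp, Ctx.fill_comp] at he
    exact h (t₂.fill x) (t₁.fill y) he
  -- the set of achievable sizes in a residue class
  set A : ℕ → Set ℕ := fun r => {s | (∃ t : S.Term σ, t.size = s) ∧ s % d = r}
    with hA
  set M : ℕ := Finset.sup (Finset.range d) (fun r => sInf (A r)) with hM
  intro n
  refine ⟨M + d * n, ?_⟩
  intro b' hb'
  by_cases hne : ∃ t : S.Term σ, t.size = b'
  swap
  · left; intro t ht; exact hne ⟨t, ht⟩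
  obtain ⟨u, hu⟩ := hne
  right
  have hmemA : b' ∈ A (b' % d) := ⟨⟨u, hu⟩, rfl⟩
  have hs0mem := Nat.sInf_mem (Set.nonempty_of_mem hmemA)
  obtain ⟨⟨u₀, hu₀⟩, hs₀r⟩ := hs0mem
  have hs₀le : sInf (A (b' % d)) ≤ b' := Nat.sInf_le hmemA
  have hs₀M : sInf (A (b' % d)) ≤ M := by
    rw [hM]
    exact Finset.le_sup (f := fun r => sInf (A r))
      (Finset.mem_range.mpr (Nat.mod_lt b' (show 0 < d by omega)))
  have hdvd : d ∣ b' - sInf (A (b' % d)) :=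
    (Nat.modEq_iff_dvd' hs₀le).mp hs₀r
  obtain ⟨k, hkd⟩ := hdvd
  have hnk : n ≤ k := by
    have h2 : d * n ≤ d * k := by omega
    exact Nat.le_of_mul_le_mul_left h2 (by omega)
  -- injection from words of length k
  let g : (Fin k → Bool) → {t : S.Term σ // t.size = b'} := fun v =>
    ⟨fillWord c₁ c₂ (List.ofFn v) u₀, by
      rw [fillWord_size c₁ c₂ d hc₁s hc₂s, List.length_ofFn, hu₀, mul_comm k d]
      omega⟩
  have hg : Function.Injective g := by
    intro v w hvw
    have hval : fillWord c₁ c₂ (List.ofFn v) u₀ = fillWord c₁ c₂ (List.ofFn w) u₀ :=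
      congrArg (fun y : {t : S.Term σ // t.size = b'} => y.1) hvw
    have hl := fillWord_inj c₁ c₂ hinc (List.ofFn v) (List.ofFn w) u₀
      (by simp) hval
    have := List.ofFn_injective hl
    exact this
  have hfin : Finite {t : S.Term σ // t.size = b'} := finite_terms_eq S b' σ
  calc n ≤ k := hnk
    _ ≤ 2 ^ k := Nat.le_of_lt (Nat.lt_two_pow_self (n := k))
    _ = Nat.card (Fin k → Bool) := by simp [Nat.card_eq_fintype_card]
    _ ≤ Nat.card {t : S.Term σ // t.size = b'} :=
        Nat.card_le_card_of_injective g hg
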